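/- arXiv:1203.1958 — 4 statements merged into one kernel-verified Lean document; each statement's English description precedes it below -/
import Mathlib

section
/- The Cauchy transform of the uniform measure (1/2)·1_{(-1,1)}(x) dx is G(z) = (log(1+z) − log(z−1))/2, and its inverse is given by G⁻¹(y) = (coth(y/2) + tanh(y/2))/2; that is, G((coth(y/2) + tanh(y/2))/2) = y for y in an appropriate domain. -/
open MeasureTheory Complex

/-- The Cauchy transform of the uniform measure `(1/2)·1_{(-1,1)}(x) dx` is
`G(z) = (log(1+z) - log(z-1))/2`, and its functional inverse is
`G⁻¹(y) = (coth(y/2) + tanh(y/2))/2` (stated on real `y > 0`). -/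
theorem cauchy_transform_uniform :
    (∀ z : ℂ, z ∉ Complex.ofReal '' Set.Icc (-1 : ℝ) 1 →
      (∫ x in Set.Ioo (-1 : ℝ) 1, (1 / 2 : ℂ) * (z - (x : ℂ))⁻¹) =
        (Complex.log (1 + z) - Complex.log (z - 1)) / 2) ∧
    (∀ y : ℝ, 0 < y →
      (∫ x in Set.Ioo (-1 : ℝ) 1,
        (1 / 2 : ℝ) * ((Real.cosh (y / 2) / Real.sinh (y / 2) + Real.tanh (y / 2)) / 2
          - x)⁻¹) = y) := by
  constructor
  · intro z hz
    have hle : (-1 : ℝ) ≤ 1 := by norm_num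
    have hne : ∀ x ∈ Set.uIcc (-1 : ℝ) 1, z - (x : ℂ) ≠ 0 := by
      intro x hx h
      rw [Set.uIcc_of_le hle] at hx
      exact hz ⟨x, hx, (sub_eq_zero.mp h).symm⟩
    have hcont : ContinuousOn (fun x : ℝ => (1 / 2 : ℂ) * (z - (x : ℂ))⁻¹)
        (Set.uIcc (-1 : ℝ) 1) :=
      continuousOn_const.mul
        (((continuous_const.sub Complex.continuous_ofReal).continuousOn).inv₀ hne)
    have hint : IntervalIntegrable (fun x : ℝ => (1 / 2 : ℂ) * (z - (x : ℂ))⁻¹)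
        volume (-1) 1 := hcont.intervalIntegrable
    rw [← MeasureTheory.integral_Ioc_eq_integral_Ioo,
      ← intervalIntegral.integral_of_le hle]
    by_cases hcase : z.im ≠ 0 ∨ 1 < z.re
    · -- use antiderivative -(1/2) log (z - x)
      have hderiv : ∀ x ∈ Set.uIcc (-1 : ℝ) 1,
          HasDerivAt (fun x : ℝ => -(1 / 2 : ℂ) * Complex.log (z - (x : ℂ)))
            ((1 / 2 : ℂ) * (z - (x : ℂ))⁻¹) x := by
        intro x hx
        rw [Set.uIcc_of_le hle] at hx
        have hmem : z - (x : ℂ) ∈ Complex.slitPlane := by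
          rcases hcase with h | h
          · exact Or.inr (by simp [h])
          · exact Or.inl (by simp; linarith [hx.2])
        have hlog : HasDerivAt Complex.log (z - (x : ℂ))⁻¹ (z - (x : ℂ)) :=
          Complex.hasDerivAt_log hmem
        have hin : HasDerivAt (fun x : ℝ => z - (x : ℂ)) (-1 : ℂ) x := by
          simpa using ((hasDerivAt_id x).ofReal_comp).const_sub z
        have := (hlog.scomp x hin).const_mul (-(1 / 2 : ℂ))
        convert this using 1
        all_goals try rfl
        simp [smul_eq_mul]
      rw [intervalIntegral.integral_eq_sub_of_hasDerivAt hderiv hint]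
      have h1 : z - ((-1 : ℝ) : ℂ) = 1 + z := by push_cast; ring
      have h2 : z - ((1 : ℝ) : ℂ) = z - 1 := by push_cast; ring
      rw [h1, h2]; ring
    · -- z is real with z.re < -1; use antiderivative -(1/2) log (x - z)
      push_neg at hcase
      obtain ⟨him, hre⟩ := hcase
      have hre' : z.re < -1 := by
        rcases lt_or_ge z.re (-1) with h | h
        · exact h
        · exact absurd ⟨z.re, ⟨h, hre⟩, by
            apply Complex.ext <;> simp [him]⟩ hz
      have hderiv : ∀ x ∈ Set.uIcc (-1 : ℝ) 1,
          HasDerivAt (fun x : ℝ => -(1 / 2 : ℂ) * Complex.log ((x : ℂ) - z))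
            ((1 / 2 : ℂ) * (z - (x : ℂ))⁻¹) x := by
        intro x hx
        rw [Set.uIcc_of_le hle] at hx
        have hmem : (x : ℂ) - z ∈ Complex.slitPlane := by
          exact Or.inl (by simp; linarith [hx.1])
        have hxz : (x : ℂ) - z ≠ 0 := Complex.slitPlane_ne_zero hmem
        have hlog : HasDerivAt Complex.log ((x : ℂ) - z)⁻¹ ((x : ℂ) - z) :=
          Complex.hasDerivAt_log hmem
        have hin : HasDerivAt (fun x : ℝ => (x : ℂ) - z) (1 : ℂ) x := by
          simpa using ((hasDerivAt_id x).ofReal_comp).sub_const z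
        have := (hlog.scomp x hin).const_mul (-(1 / 2 : ℂ))
        convert this using 1
        all_goals try rfl
        rw [smul_eq_mul, one_mul]
        have : (z - (x : ℂ))⁻¹ = -((x : ℂ) - z)⁻¹ := by
          rw [← inv_neg]; ring_nf
        rw [this]; ring
      rw [intervalIntegral.integral_eq_sub_of_hasDerivAt hderiv hint]
      -- now z = (z.re : ℂ) with z.re < -1
      set r := z.re with hr
      have hz' : z = (r : ℂ) := by apply Complex.ext <;> simp [him, r]
      have e1 : ((1 : ℝ) : ℂ) - z = ((1 - r : ℝ) : ℂ) := by rw [hz']; push_cast; ring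
      have e2 : ((-1 : ℝ) : ℂ) - z = ((-1 - r : ℝ) : ℂ) := by rw [hz']; push_cast; ring
      have e3 : 1 + z = ((1 + r : ℝ) : ℂ) := by rw [hz']; push_cast; ring
      have e4 : z - 1 = ((r - 1 : ℝ) : ℂ) := by rw [hz']; push_cast; ring
      rw [e1, e2, e3, e4]
      rw [← Complex.ofReal_log (by linarith : (0:ℝ) ≤ 1 - r),
        ← Complex.ofReal_log (by linarith : (0:ℝ) ≤ -1 - r)]
      have l3 : Complex.log ((1 + r : ℝ) : ℂ) =
          (Real.log (-1 - r) : ℂ) + Real.pi * Complex.I := by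
        rw [Complex.log, Complex.arg_ofReal_of_neg (by linarith : (1 + r : ℝ) < 0)]
        congr 2
        rw [Complex.norm_real, Real.norm_eq_abs, abs_of_neg (by linarith : (1 + r : ℝ) < 0)]
        ring_nf
      have l4 : Complex.log ((r - 1 : ℝ) : ℂ) =
          (Real.log (1 - r) : ℂ) + Real.pi * Complex.I := by
        rw [Complex.log, Complex.arg_ofReal_of_neg (by linarith : (r - 1 : ℝ) < 0)]
        congr 2
        rw [Complex.norm_real, Real.norm_eq_abs, abs_of_neg (by linarith : (r - 1 : ℝ) < 0)]
        ring_nf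
      rw [l3, l4]; ring
  · intro y hy
    have hle : (-1 : ℝ) ≤ 1 := by norm_num
    have hs2 : 0 < Real.sinh (y / 2) := Real.sinh_pos_iff.mpr (by linarith)
    have hc2 : 0 < Real.cosh (y / 2) := Real.cosh_pos _
    have hsy : 0 < Real.sinh y := Real.sinh_pos_iff.mpr hy
    have hsinh : Real.sinh y = 2 * Real.sinh (y / 2) * Real.cosh (y / 2) := by
      have := Real.sinh_two_mul (y / 2)
      rwa [show (2 : ℝ) * (y / 2) = y by ring] at this
    have hcosh : Real.cosh y = Real.cosh (y / 2) ^ 2 + Real.sinh (y / 2) ^ 2 := by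
      have := Real.cosh_two_mul (y / 2)
      rwa [show (2 : ℝ) * (y / 2) = y by ring] at this
    have hc : (Real.cosh (y / 2) / Real.sinh (y / 2) + Real.tanh (y / 2)) / 2
        = Real.cosh y / Real.sinh y := by
      rw [Real.tanh_eq_sinh_div_cosh, hsinh, hcosh]
      field_simp
    rw [hc]
    set c := Real.cosh y / Real.sinh y with hcdef
    have hc1 : 1 < c := by
      rw [hcdef, lt_div_iff₀ hsy]
      have := Real.cosh_sub_sinh y
      have : 0 < Real.exp (-y) := Real.exp_pos _
      linarith [Real.cosh_sub_sinh y]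
    have hne : ∀ x ∈ Set.uIcc (-1 : ℝ) 1, c - x ≠ 0 := by
      intro x hx
      rw [Set.uIcc_of_le hle] at hx
      have : x < c := lt_of_le_of_lt hx.2 hc1
      intro h; linarith [sub_eq_zero.mp h]
    have hint : IntervalIntegrable (fun x : ℝ => (1 / 2 : ℝ) * (c - x)⁻¹)
        volume (-1) 1 :=
      (continuousOn_const.mul
        (((continuous_const.sub continuous_id).continuousOn).inv₀ hne)).intervalIntegrable
    have hderiv : ∀ x ∈ Set.uIcc (-1 : ℝ) 1,
        HasDerivAt (fun x : ℝ => -(1 / 2 : ℝ) * Real.log (c - x))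
          ((1 / 2 : ℝ) * (c - x)⁻¹) x := by
      intro x hx
      have hcx : c - x ≠ 0 := hne x hx
      have hin : HasDerivAt (fun x : ℝ => c - x) (-1 : ℝ) x := by
        simpa using (hasDerivAt_id x).const_sub c
      have := ((Real.hasDerivAt_log hcx).comp x hin).const_mul (-(1 / 2 : ℝ))
      convert this using 1
      all_goals try rfl
      simp [Function.comp]
    rw [← MeasureTheory.integral_Ioc_eq_integral_Ioo,
      ← intervalIntegral.integral_of_le hle,
      intervalIntegral.integral_eq_sub_of_hasDerivAt hderiv hint]
    have hca : c + 1 = Real.exp y / Real.sinh y := by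
      rw [hcdef, div_add' _ _ _ (ne_of_gt hsy), one_mul, ← Real.cosh_add_sinh]
    have hcb : c - 1 = Real.exp (-y) / Real.sinh y := by
      rw [hcdef, div_sub' (ne_of_gt hsy), mul_one, ← Real.cosh_sub_sinh]
    have la : Real.log (c + 1) = y - Real.log (Real.sinh y) := by
      rw [hca, Real.log_div (Real.exp_ne_zero y) (ne_of_gt hsy), Real.log_exp]
    have lb : Real.log (c - 1) = -y - Real.log (Real.sinh y) := by
      rw [hcb, Real.log_div (Real.exp_ne_zero _) (ne_of_gt hsy), Real.log_exp]
    have h1 : c - (-1 : ℝ) = c + 1 := by ring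
    rw [h1, la, lb]
    ring
end

section
/- The function J₊⁻¹(z) = z − √(z−1)·√(z+1) (principal branches of the square root) is a right inverse of the Joukowsky map J(w) = (w + 1/w)/2 on the slit plane: for all z ∈ ℂ \ [−1,1], J(J₊⁻¹(z)) = z, and |J₊⁻¹(z)| < 1. -/
open Complex

private lemma cpow_half_re (x : ℂ) (hx : x ≠ 0) :
    (x ^ ((1 : ℂ) / 2)).re = Real.exp (Real.log (‖x‖) / 2) * Real.cos (x.arg / 2) := by
  rw [Complex.cpow_def_of_ne_zero hx, Complex.exp_re]
  have h1 : (Complex.log x * (1 / 2)).re = Real.log (‖x‖) / 2 := by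
    simp [Complex.mul_re, Complex.log_re, Complex.log_im]
    ring
  have h2 : (Complex.log x * (1 / 2)).im = x.arg / 2 := by
    simp [Complex.mul_im, Complex.log_re, Complex.log_im]
    ring
  rw [h1, h2]

private lemma cpow_half_im (x : ℂ) (hx : x ≠ 0) :
    (x ^ ((1 : ℂ) / 2)).im = Real.exp (Real.log (‖x‖) / 2) * Real.sin (x.arg / 2) := by
  rw [Complex.cpow_def_of_ne_zero hx, Complex.exp_im]
  have h1 : (Complex.log x * (1 / 2)).re = Real.log (‖x‖) / 2 := by
    simp [Complex.mul_re, Complex.log_re, Complex.log_im]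
    ring
  have h2 : (Complex.log x * (1 / 2)).im = x.arg / 2 := by
    simp [Complex.mul_im, Complex.log_re, Complex.log_im]
    ring
  rw [h1, h2]

private lemma cpow_half_re_nonneg (x : ℂ) (hx : x ≠ 0) : 0 ≤ (x ^ ((1 : ℂ) / 2)).re := by
  rw [cpow_half_re x hx]
  have h1 := Complex.neg_pi_lt_arg x
  have h2 := Complex.arg_le_pi x
  have : 0 ≤ Real.cos (x.arg / 2) := by
    apply Real.cos_nonneg_of_mem_Icc
    constructor <;> [linarith; linarith]
  positivity

private lemma cpow_half_im_pos (x : ℂ) (h : 0 < x.im) : 0 < (x ^ ((1 : ℂ) / 2)).im := by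
  have hx : x ≠ 0 := by intro h0; rw [h0] at h; simp at h
  rw [cpow_half_im x hx]
  have h1 : 0 ≤ x.arg := Complex.arg_nonneg_iff.mpr h.le
  have h2 : x.arg ≠ 0 := by
    intro h0
    rw [Complex.arg_eq_zero_iff] at h0
    exact h.ne' h0.2
  have h3 : x.arg ≤ Real.pi := Complex.arg_le_pi x
  have h4 : x.arg ≠ Real.pi := by
    intro h0
    rw [Complex.arg_eq_pi_iff] at h0
    exact h.ne' h0.2
  have : 0 < Real.sin (x.arg / 2) := by
    apply Real.sin_pos_of_pos_of_lt_pi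
    · cases lt_or_eq_of_le h1 with
      | inl h => linarith
      | inr h => exact absurd h.symm h2
    · have := Real.pi_pos; cases lt_or_eq_of_le h3 with
      | inl h => linarith
      | inr h => exact absurd h h4
  positivity

private lemma cpow_half_im_neg (x : ℂ) (h : x.im < 0) : (x ^ ((1 : ℂ) / 2)).im < 0 := by
  have hx : x ≠ 0 := by intro h0; rw [h0] at h; simp at h
  rw [cpow_half_im x hx]
  have h1 : x.arg < 0 := Complex.arg_neg_iff.mpr h
  have h2 : -Real.pi < x.arg := Complex.neg_pi_lt_arg x
  have hsin : Real.sin (x.arg / 2) < 0 := by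
    apply Real.sin_neg_of_neg_of_neg_pi_lt
    · linarith
    · have := Real.pi_pos; linarith
  have hexp : 0 < Real.exp (Real.log (‖x‖) / 2) := Real.exp_pos _
  nlinarith

set_option maxHeartbeats 2000000 in
/-- `J₊⁻¹(z) = z - √(z-1)·√(z+1)` (principal branches) is a right inverse of
the Joukowsky map `J(w) = (w + 1/w)/2` on `ℂ \ [-1,1]`, with values in the
open unit disk. -/
theorem joukowsky_right_inverse (z : ℂ)
    (hz : z ∉ Complex.ofReal '' Set.Icc (-1 : ℝ) 1) :
    ((z - (z - 1) ^ ((1 : ℂ) / 2) * (z + 1) ^ ((1 : ℂ) / 2)) +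
        (z - (z - 1) ^ ((1 : ℂ) / 2) * (z + 1) ^ ((1 : ℂ) / 2))⁻¹) / 2 = z ∧
    ‖z - (z - 1) ^ ((1 : ℂ) / 2) * (z + 1) ^ ((1 : ℂ) / 2)‖ < 1 := by
  have hz1 : z ≠ 1 := by
    rintro rfl
    exact hz ⟨1, ⟨by norm_num, by norm_num⟩, by norm_num⟩
  have hz2 : z ≠ -1 := by
    rintro rfl
    exact hz ⟨-1, ⟨by norm_num, by norm_num⟩, by norm_num⟩
  have hne1 : z - 1 ≠ 0 := sub_ne_zero.mpr hz1
  have hne2 : z + 1 ≠ 0 := by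
    intro h; apply hz2; linear_combination h
  set a : ℂ := (z - 1) ^ ((1 : ℂ) / 2) with ha_def
  set b : ℂ := (z + 1) ^ ((1 : ℂ) / 2) with hb_def
  have ha : a * a = z - 1 := by
    rw [ha_def, ← Complex.cpow_add _ _ hne1]
    norm_num
  have hb : b * b = z + 1 := by
    rw [hb_def, ← Complex.cpow_add _ _ hne2]
    norm_num
  have hprod : (z - a * b) * (z + a * b) = 1 := by
    linear_combination (-(b * b)) * ha - (z - 1) * hb
  have hw : z - a * b ≠ 0 := left_ne_zero_of_mul_eq_one hprod
  have hinv : (z - a * b)⁻¹ = z + a * b := inv_eq_of_mul_eq_one_right hprod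
  constructor
  · rw [hinv]; ring
  -- the `key` positivity fact
  have ha0 : a ≠ 0 := by
    intro h; rw [h] at ha; simp at ha; exact hne1 ha.symm
  have hb0 : b ≠ 0 := by
    intro h; rw [h] at hb; simp at hb; exact hne2 hb.symm
  have key : 0 < a.re * b.re + a.im * b.im := by
    rcases lt_trichotomy z.im 0 with him | him | him
    · have h1 : (z - 1).im < 0 := by simpa using him
      have h2 : (z + 1).im < 0 := by simpa using him
      have haim := cpow_half_im_neg _ h1
      have hbim := cpow_half_im_neg _ h2
      have hare := cpow_half_re_nonneg _ hne1
      have hbre := cpow_half_re_nonneg _ hne2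
      rw [← ha_def] at haim hare
      rw [← hb_def] at hbim hbre
      nlinarith [mul_pos_of_neg_of_neg haim hbim, mul_nonneg hare hbre]
    · have hreal : z = (z.re : ℂ) := by
        apply Complex.ext <;> simp [him]
      have hcase : z.re < -1 ∨ 1 < z.re := by
        by_contra h
        push_neg at h
        exact hz ⟨z.re, ⟨h.1, h.2⟩, hreal.symm⟩
      have hexp1 : 0 < Real.exp (Real.log (‖z - 1‖) / 2) := Real.exp_pos _
      have hexp2 : 0 < Real.exp (Real.log (‖z + 1‖) / 2) := Real.exp_pos _
      rcases hcase with hlt | hgt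
      · have harg1 : (z - 1).arg = Real.pi := by
          rw [Complex.arg_eq_pi_iff]
          constructor <;> simp [him] <;> linarith
        have harg2 : (z + 1).arg = Real.pi := by
          rw [Complex.arg_eq_pi_iff]
          constructor <;> simp [him] <;> linarith
        have h1 := cpow_half_re _ hne1
        have h2 := cpow_half_re _ hne2
        have h3 := cpow_half_im _ hne1
        have h4 := cpow_half_im _ hne2
        rw [← ha_def, harg1] at h1 h3
        rw [← hb_def, harg2] at h2 h4
        rw [Real.cos_pi_div_two] at h1 h2
        rw [Real.sin_pi_div_two] at h3 h4
        rw [h1, h2, h3, h4]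
        nlinarith
      · have harg1 : (z - 1).arg = 0 := by
          rw [Complex.arg_eq_zero_iff]
          constructor <;> simp [him] <;> linarith
        have harg2 : (z + 1).arg = 0 := by
          rw [Complex.arg_eq_zero_iff]
          constructor <;> simp [him] <;> linarith
        have h1 := cpow_half_re _ hne1
        have h2 := cpow_half_re _ hne2
        have h3 := cpow_half_im _ hne1
        have h4 := cpow_half_im _ hne2
        rw [← ha_def, harg1] at h1 h3
        rw [← hb_def, harg2] at h2 h4
        norm_num at h1 h2 h3 h4
        rw [h1, h2, h3, h4]
        nlinarith
    · have h1 : 0 < (z - 1).im := by simpa using him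
      have h2 : 0 < (z + 1).im := by simpa using him
      have haim := cpow_half_im_pos _ h1
      have hbim := cpow_half_im_pos _ h2
      have hare := cpow_half_re_nonneg _ hne1
      have hbre := cpow_half_re_nonneg _ hne2
      rw [← ha_def] at haim hare
      rw [← hb_def] at hbim hbre
      nlinarith [mul_pos haim hbim, mul_nonneg hare hbre]
  -- relate real and imaginary parts of z to a, b
  have hare2 := congrArg Complex.re ha
  have haim2 := congrArg Complex.im ha
  have hbre2 := congrArg Complex.re hb
  have hbim2 := congrArg Complex.im hb
  simp only [Complex.mul_re, Complex.mul_im, Complex.sub_re, Complex.sub_im,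
    Complex.add_re, Complex.add_im, Complex.one_re, Complex.one_im] at hare2 haim2 hbre2 hbim2
  have hzre : z.re = (a.re ^ 2 - a.im ^ 2 + b.re ^ 2 - b.im ^ 2) / 2 := by nlinarith
  have hzim : z.im = a.re * a.im + b.re * b.im := by nlinarith
  -- normSq comparison
  have hsum : 0 < a.re ^ 2 + a.im ^ 2 + b.re ^ 2 + b.im ^ 2 := by
    have h1 : 0 < Complex.normSq a := Complex.normSq_pos.mpr ha0
    have h2 : 0 < Complex.normSq b := Complex.normSq_pos.mpr hb0
    simp only [Complex.normSq_apply] at h1 h2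
    nlinarith
  have hns : Complex.normSq (z - a * b) < Complex.normSq (z + a * b) := by
    simp only [Complex.normSq_apply, Complex.sub_re, Complex.sub_im, Complex.add_re,
      Complex.add_im, Complex.mul_re, Complex.mul_im]
    rw [hzre, hzim]
    nlinarith [mul_pos hsum key]
  have habs2 : ‖z - a * b‖ ^ 2 < ‖z + a * b‖ ^ 2 := by
    rw [Complex.sq_norm, Complex.sq_norm]; exact hns
  have hmul : ‖z - a * b‖ * ‖z + a * b‖ = 1 := by
    rw [← norm_mul, hprod, norm_one]
  have hA : 0 ≤ ‖z - a * b‖ := norm_nonneg _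
  have hB : 0 ≤ ‖z + a * b‖ := norm_nonneg _
  nlinarith [habs2, hmul, hA, hB]
end

section
/- For w in the open unit disk with w ≠ 0 and J(w) ∉ [−1,1], one has J₊⁻¹(J(w)) = w, where J(w) = (w + 1/w)/2 and J₊⁻¹(z) = z − √(z−1)√(1+z) with principal branch square roots. -/
open Complex

set_option maxHeartbeats 1600000 in
/-- `J₊⁻¹(J(w)) = w` for `w` in the punctured open unit disk with
`J(w) ∉ [-1,1]`, where `J(w) = (w + 1/w)/2` and
`J₊⁻¹(z) = z - √(z-1)√(z+1)` with principal branch square roots. -/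
theorem joukowsky_left_inverse (w : ℂ) (hw : ‖w‖ < 1) (hw0 : w ≠ 0)
    (hJ : (w + w⁻¹) / 2 ∉ Complex.ofReal '' Set.Icc (-1 : ℝ) 1) :
    (w + w⁻¹) / 2 -
        ((w + w⁻¹) / 2 - 1) ^ ((1 : ℂ) / 2) * ((w + w⁻¹) / 2 + 1) ^ ((1 : ℂ) / 2) = w := by
  have half : ((1 : ℂ) / 2) = (2⁻¹ : ℂ) := by norm_num
  set z : ℂ := (w + w⁻¹) / 2 with hzdef
  set a : ℂ := z - 1 with hadef
  set b : ℂ := z + 1 with hbdef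
  have ha0 : a ≠ 0 := by
    intro h
    apply hJ
    have hz1 : z = 1 := by rw [hadef] at h; linear_combination h
    exact ⟨1, by norm_num, by simp [hz1]⟩
  have hb0 : b ≠ 0 := by
    intro h
    apply hJ
    have hz1 : z = -1 := by rw [hbdef] at h; linear_combination h
    exact ⟨-1, by norm_num, by simp [hz1]⟩
  set s : ℂ := a ^ ((1 : ℂ) / 2) * b ^ ((1 : ℂ) / 2) with hsdef
  set t : ℂ := z - w with htdef
  have hs2 : s * s = a * b := by
    rw [hsdef, mul_mul_mul_comm, ← Complex.cpow_add _ _ ha0, ← Complex.cpow_add _ _ hb0]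
    norm_num
  have hab : a * b = t * t := by
    rw [hadef, hbdef, htdef, hzdef]
    field_simp
    ring
  have hfactor : (s - t) * (s + t) = 0 := by linear_combination hs2 + hab
  -- preliminary numeric facts
  have hns0 : 0 < Complex.normSq w := Complex.normSq_pos.mpr hw0
  have hns1 : Complex.normSq w < 1 := by
    rw [← Complex.sq_norm]; nlinarith [norm_nonneg w]
  have hz_im : z.im = w.im * (Complex.normSq w - 1) / (2 * Complex.normSq w) := by
    rw [hzdef]
    simp [Complex.div_im, Complex.add_im, Complex.add_re, Complex.inv_im, Complex.inv_re]
    field_simp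
    ring
  have ht_im : t.im = -(w.im * (Complex.normSq w + 1)) / (2 * Complex.normSq w) := by
    rw [htdef, Complex.sub_im, hz_im]
    field_simp
    ring
  have ha_im : a.im = z.im := by simp [hadef]
  have hb_im : b.im = z.im := by simp [hbdef]
  rcases mul_eq_zero.mp hfactor with h | h
  · -- good sign
    have hst : s = t := by linear_combination h
    rw [hst, htdef]
    ring
  · -- bad sign: contradiction
    exfalso
    have him : s.im + t.im = 0 := by
      have : (s + t).im = 0 := by rw [h]; simp
      simpa [Complex.add_im] using this
    have hre : s.re + t.re = 0 := by
      have : (s + t).re = 0 := by rw [h]; simp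
      simpa [Complex.add_re] using this
    have hsim : s.im = (a ^ ((1:ℂ)/2)).re * (b ^ ((1:ℂ)/2)).im
        + (a ^ ((1:ℂ)/2)).im * (b ^ ((1:ℂ)/2)).re := by
      rw [hsdef, Complex.mul_im]
    have hsre : s.re = (a ^ ((1:ℂ)/2)).re * (b ^ ((1:ℂ)/2)).re
        - (a ^ ((1:ℂ)/2)).im * (b ^ ((1:ℂ)/2)).im := by
      rw [hsdef, Complex.mul_re]
    rcases lt_trichotomy w.im 0 with hwim | hwim | hwim
    · -- w.im < 0 : z.im > 0
      have hzim : 0 < z.im := by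
        rw [hz_im]
        apply div_pos (mul_pos_of_neg_of_neg hwim (by linarith)) (by linarith)
      have haim : 0 < a.im := ha_im ▸ hzim
      have hbim : 0 < b.im := hb_im ▸ hzim
      have hra : 0 < (a ^ ((1:ℂ)/2)).re := by
        rw [half, Complex.cpow_inv_two_re]
        apply Real.sqrt_pos.mpr
        have := Complex.abs_re_lt_norm.mpr (ne_of_gt haim)
        have := neg_abs_le a.re
        linarith
      have hrb : 0 < (b ^ ((1:ℂ)/2)).re := by
        rw [half, Complex.cpow_inv_two_re]
        apply Real.sqrt_pos.mpr
        have := Complex.abs_re_lt_norm.mpr (ne_of_gt hbim)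
        have := neg_abs_le b.re
        linarith
      have hia : 0 < (a ^ ((1:ℂ)/2)).im := by
        rw [half, Complex.cpow_inv_two_im_eq_sqrt haim.le]
        apply Real.sqrt_pos.mpr
        have := Complex.abs_re_lt_norm.mpr (ne_of_gt haim)
        have := le_abs_self a.re
        linarith
      have hib : 0 < (b ^ ((1:ℂ)/2)).im := by
        rw [half, Complex.cpow_inv_two_im_eq_sqrt hbim.le]
        apply Real.sqrt_pos.mpr
        have := Complex.abs_re_lt_norm.mpr (ne_of_gt hbim)
        have := le_abs_self b.re
        linarith
      have hsim' : 0 < s.im := by rw [hsim]; positivity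
      have htim : 0 < t.im := by
        rw [ht_im]
        apply div_pos _ (by linarith)
        have : 0 < -w.im := by linarith
        nlinarith
      linarith
    · -- w.im = 0 : real case
      have hzim : z.im = 0 := by rw [hz_im, hwim]; ring
      have haim : a.im = 0 := ha_im ▸ hzim
      have hbim : b.im = 0 := hb_im ▸ hzim
      set x : ℝ := w.re with hxdef
      have hx0 : x ≠ 0 := by
        intro hx
        exact hw0 (Complex.ext hx hwim)
      have hxabs : |x| < 1 := lt_of_le_of_lt (Complex.abs_re_le_norm w) hw
      have hx1 : x < 1 := lt_of_le_of_lt (le_abs_self x) hxabs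
      have hxm1 : -1 < x := by have := neg_abs_le x; linarith
      have hnsx : Complex.normSq w = x ^ 2 := by
        rw [Complex.normSq_apply, hwim]; ring
      have hz_re : z.re = (x + 1 / x) / 2 := by
        rw [hzdef]
        simp [Complex.div_re, Complex.add_re, Complex.inv_re, hnsx, Complex.normSq_apply, hwim]
        field_simp
        ring
      have ha_re : a.re = (x - 1) ^ 2 / (2 * x) := by
        rw [hadef, Complex.sub_re, hz_re, Complex.one_re]
        field_simp
        ring
      have hb_re : b.re = (x + 1) ^ 2 / (2 * x) := by
        rw [hbdef, Complex.add_re, hz_re, Complex.one_re]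
        field_simp
        ring
      have ht_re : t.re = (1 / x - x) / 2 := by
        rw [htdef, Complex.sub_re, hz_re]
        field_simp
        ring
      have habs_a : ‖a‖ = |a.re| := by
        rw [Complex.norm_def, Complex.normSq_apply, haim, mul_zero, add_zero,
          Real.sqrt_mul_self_eq_abs]
      have habs_b : ‖b‖ = |b.re| := by
        rw [Complex.norm_def, Complex.normSq_apply, hbim, mul_zero, add_zero,
          Real.sqrt_mul_self_eq_abs]
      rcases lt_trichotomy x 0 with hx | hx | hx
      · -- x < 0 : a.re < 0, b.re < 0; sqrt's purely imaginary
        have hare : a.re < 0 := by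
          rw [ha_re]
          apply div_neg_of_pos_of_neg (by nlinarith [sq_nonneg x]) (by linarith)
        have hbre : b.re < 0 := by
          rw [hb_re]
          apply div_neg_of_pos_of_neg (pow_pos (by linarith : (0:ℝ) < x + 1) 2) (by linarith)
        have hra : (a ^ ((1:ℂ)/2)).re = 0 := by
          rw [half, Complex.cpow_inv_two_re, habs_a, abs_of_neg hare]
          simp
        have hrb : (b ^ ((1:ℂ)/2)).re = 0 := by
          rw [half, Complex.cpow_inv_two_re, habs_b, abs_of_neg hbre]
          simp
        have hia : 0 < (a ^ ((1:ℂ)/2)).im := by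
          rw [half, Complex.cpow_inv_two_im_eq_sqrt haim.ge, habs_a, abs_of_neg hare]
          apply Real.sqrt_pos.mpr
          linarith
        have hib : 0 < (b ^ ((1:ℂ)/2)).im := by
          rw [half, Complex.cpow_inv_two_im_eq_sqrt hbim.ge, habs_b, abs_of_neg hbre]
          apply Real.sqrt_pos.mpr
          linarith
        have hsre' : s.re < 0 := by
          rw [hsre, hra, hrb]
          nlinarith
        have htre : t.re < 0 := by
          rw [ht_re]
          have h1 : 1 / x < -1 := by
            rw [div_lt_iff_of_neg hx]
            linarith
          linarith
        linarith
      · exact hx0 hx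
      · -- x > 0 : a.re > 0, b.re > 0; sqrt's real positive
        have hare : 0 < a.re := by
          rw [ha_re]
          apply div_pos (by nlinarith [sq_nonneg x]) (by linarith)
        have hbre : 0 < b.re := by
          rw [hb_re]
          apply div_pos (pow_pos (by linarith : (0:ℝ) < x + 1) 2) (by linarith)
        have hra : 0 < (a ^ ((1:ℂ)/2)).re := by
          rw [half, Complex.cpow_inv_two_re, habs_a, abs_of_pos hare]
          apply Real.sqrt_pos.mpr
          linarith
        have hrb : 0 < (b ^ ((1:ℂ)/2)).re := by
          rw [half, Complex.cpow_inv_two_re, habs_b, abs_of_pos hbre]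
          apply Real.sqrt_pos.mpr
          linarith
        have hia : (a ^ ((1:ℂ)/2)).im = 0 := by
          rw [half, Complex.cpow_inv_two_im_eq_sqrt haim.ge, habs_a, abs_of_pos hare]
          simp
        have hib : (b ^ ((1:ℂ)/2)).im = 0 := by
          rw [half, Complex.cpow_inv_two_im_eq_sqrt hbim.ge, habs_b, abs_of_pos hbre]
          simp
        have hsre' : 0 < s.re := by
          rw [hsre, hia, hib]
          nlinarith
        have htre : 0 < t.re := by
          rw [ht_re]
          have h1 : 1 < 1 / x := by
            rw [lt_div_iff₀ hx]
            linarith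
          linarith
        linarith
    · -- w.im > 0 : z.im < 0
      have hzim : z.im < 0 := by
        rw [hz_im]
        apply div_neg_of_neg_of_pos (mul_neg_of_pos_of_neg hwim (by linarith)) (by linarith)
      have haim : a.im < 0 := ha_im ▸ hzim
      have hbim : b.im < 0 := hb_im ▸ hzim
      have hra : 0 < (a ^ ((1:ℂ)/2)).re := by
        rw [half, Complex.cpow_inv_two_re]
        apply Real.sqrt_pos.mpr
        have := Complex.abs_re_lt_norm.mpr (ne_of_lt haim)
        have := neg_abs_le a.re
        linarith
      have hrb : 0 < (b ^ ((1:ℂ)/2)).re := by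
        rw [half, Complex.cpow_inv_two_re]
        apply Real.sqrt_pos.mpr
        have := Complex.abs_re_lt_norm.mpr (ne_of_lt hbim)
        have := neg_abs_le b.re
        linarith
      have hia : (a ^ ((1:ℂ)/2)).im < 0 := by
        rw [half, Complex.cpow_inv_two_im_eq_neg_sqrt haim]
        simp only [neg_neg, Left.neg_neg_iff]
        apply Real.sqrt_pos.mpr
        have := Complex.abs_re_lt_norm.mpr (ne_of_lt haim)
        have := le_abs_self a.re
        linarith
      have hib : (b ^ ((1:ℂ)/2)).im < 0 := by
        rw [half, Complex.cpow_inv_two_im_eq_neg_sqrt hbim]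
        simp only [neg_neg, Left.neg_neg_iff]
        apply Real.sqrt_pos.mpr
        have := Complex.abs_re_lt_norm.mpr (ne_of_lt hbim)
        have := le_abs_self b.re
        linarith
      have hsim' : s.im < 0 := by
        rw [hsim]
        nlinarith
      have htim : t.im < 0 := by
        rw [ht_im]
        apply div_neg_of_neg_of_pos _ (by linarith)
        nlinarith
      linarith
end

section
/- For x ∈ (−1,1) and the boundary values of powers of the inverse Joukowsky map, lim_{ε→0⁺} i·(J₊⁻¹(x+iε)^k − J₊⁻¹(x−iε)^k)/2 = U_{k−1}(x)·√(1−x²), where U_{k−1} is the Chebyshev polynomial of the second kind of degree k−1. -/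
open Complex Filter Polynomial

/-- The inverse Joukowsky map `J₊⁻¹(z) = z - √(z-1)√(z+1)`, principal branches. -/
noncomputable def Jinv (z : ℂ) : ℂ := z - (z - 1) ^ ((1 : ℂ) / 2) * (z + 1) ^ ((1 : ℂ) / 2)

lemma sqrt_bv_pos (a : ℝ) (ha : 0 < a) :
    Tendsto (fun ε : ℝ => ((a : ℂ) + ε * Complex.I) ^ ((1:ℂ)/2))
      (nhdsWithin 0 (Set.Ioi 0)) (nhds (Real.sqrt a)) := by
  have hcont : ContinuousAt (fun z : ℂ => z ^ ((1:ℂ)/2)) (a : ℂ) :=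
    continuousAt_cpow_const (Or.inl (by simpa using ha))
  have hbase : Tendsto (fun ε : ℝ => ((a : ℂ) + ε * Complex.I)) (nhdsWithin 0 (Set.Ioi 0))
      (nhds (a : ℂ)) := by
    have : Continuous (fun ε : ℝ => ((a : ℂ) + ε * Complex.I)) := by continuity
    simpa using (this.tendsto 0).mono_left nhdsWithin_le_nhds
  have := hcont.tendsto.comp hbase
  convert this using 2
  · rfl
  rw [show ((1:ℂ)/2) = ((1/2 : ℝ) : ℂ) by push_cast; ring, ← Complex.ofReal_cpow ha.le, Real.sqrt_eq_rpow]

lemma sqrt_bv_pos' (a : ℝ) (ha : 0 < a) :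
    Tendsto (fun ε : ℝ => ((a : ℂ) - ε * Complex.I) ^ ((1:ℂ)/2))
      (nhdsWithin 0 (Set.Ioi 0)) (nhds (Real.sqrt a)) := by
  have hcont : ContinuousAt (fun z : ℂ => z ^ ((1:ℂ)/2)) (a : ℂ) :=
    continuousAt_cpow_const (Or.inl (by simpa using ha))
  have hbase : Tendsto (fun ε : ℝ => ((a : ℂ) - ε * Complex.I)) (nhdsWithin 0 (Set.Ioi 0))
      (nhds (a : ℂ)) := by
    have : Continuous (fun ε : ℝ => ((a : ℂ) - ε * Complex.I)) := by continuity
    simpa using (this.tendsto 0).mono_left nhdsWithin_le_nhds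
  have := hcont.tendsto.comp hbase
  convert this using 2
  · rfl
  rw [show ((1:ℂ)/2) = ((1/2 : ℝ) : ℂ) by push_cast; ring,
    ← Complex.ofReal_cpow ha.le, Real.sqrt_eq_rpow]

lemma exp_half_log (a : ℝ) (ha : a < 0) :
    Complex.exp ((↑(Real.log (-a)) + ↑Real.pi * Complex.I) * (1/2)) =
      (Real.sqrt (-a) : ℂ) * Complex.I := by
  have h : (↑(Real.log (-a)) + ↑Real.pi * Complex.I) * (1/2)
      = ↑(Real.log (-a) / 2) + ↑(Real.pi/2) * Complex.I := by push_cast; ring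
  rw [h, Complex.exp_add, Complex.exp_mul_I, ← Complex.ofReal_cos, ← Complex.ofReal_sin,
    Real.cos_pi_div_two, Real.sin_pi_div_two, ← Complex.ofReal_exp]
  have : Real.exp (Real.log (-a) / 2) = Real.sqrt (-a) := by
    rw [Real.sqrt_eq_rpow, Real.rpow_def_of_pos (by linarith)]
    ring_nf
  rw [this]; push_cast; ring

lemma sqrt_bv_neg (a : ℝ) (ha : a < 0) :
    Tendsto (fun ε : ℝ => ((a : ℂ) + ε * Complex.I) ^ ((1:ℂ)/2))
      (nhdsWithin 0 (Set.Ioi 0)) (nhds ((Real.sqrt (-a) : ℂ) * Complex.I)) := by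
  have hbase : Tendsto (fun ε : ℝ => ((a : ℂ) + ε * Complex.I)) (nhdsWithin 0 (Set.Ioi 0))
      (nhdsWithin (a : ℂ) {z : ℂ | 0 ≤ z.im}) := by
    rw [tendsto_nhdsWithin_iff]
    constructor
    · have : Continuous (fun ε : ℝ => ((a : ℂ) + ε * Complex.I)) := by continuity
      simpa using (this.tendsto 0).mono_left nhdsWithin_le_nhds
    · filter_upwards [self_mem_nhdsWithin] with ε (hε : 0 < ε)
      simp [Set.mem_setOf_eq, hε.le]
  have hlog := (Complex.tendsto_log_nhdsWithin_im_nonneg_of_re_neg_of_im_zero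
    (z := (a : ℂ)) (by simpa using ha) (by simp)).comp hbase
  have habs : ‖(a : ℂ)‖ = -a := by
    rw [Complex.norm_real, Real.norm_eq_abs, abs_of_neg ha]
  rw [habs] at hlog
  have hexp := (Complex.continuous_exp.tendsto _).comp (hlog.mul_const ((1:ℂ)/2))
  rw [exp_half_log a ha] at hexp
  refine hexp.congr' ?_
  filter_upwards [self_mem_nhdsWithin] with ε (hε : 0 < ε)
  have hne : (a : ℂ) + ε * Complex.I ≠ 0 := by
    intro h
    have := congrArg Complex.im h
    simpa using absurd this (by simpa using hε.ne')
  simp only [Function.comp]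
  rw [Complex.cpow_def_of_ne_zero hne]

lemma sqrt_bv_neg' (a : ℝ) (ha : a < 0) :
    Tendsto (fun ε : ℝ => ((a : ℂ) - ε * Complex.I) ^ ((1:ℂ)/2))
      (nhdsWithin 0 (Set.Ioi 0)) (nhds (-((Real.sqrt (-a) : ℂ) * Complex.I))) := by
  have hbase : Tendsto (fun ε : ℝ => ((a : ℂ) - ε * Complex.I)) (nhdsWithin 0 (Set.Ioi 0))
      (nhdsWithin (a : ℂ) {z : ℂ | z.im < 0}) := by
    rw [tendsto_nhdsWithin_iff]
    constructor
    · have : Continuous (fun ε : ℝ => ((a : ℂ) - ε * Complex.I)) := by continuity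
      simpa using (this.tendsto 0).mono_left nhdsWithin_le_nhds
    · filter_upwards [self_mem_nhdsWithin] with ε (hε : 0 < ε)
      simp [Set.mem_setOf_eq, hε]
  have hlog := (Complex.tendsto_log_nhdsWithin_im_neg_of_re_neg_of_im_zero
    (z := (a : ℂ)) (by simpa using ha) (by simp)).comp hbase
  have habs : ‖(a : ℂ)‖ = -a := by
    rw [Complex.norm_real, Real.norm_eq_abs, abs_of_neg ha]
  rw [habs] at hlog
  have hexp := (Complex.continuous_exp.tendsto _).comp (hlog.mul_const ((1:ℂ)/2))
  have hval : Complex.exp ((↑(Real.log (-a)) - ↑Real.pi * Complex.I) * (1/2)) =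
      -((Real.sqrt (-a) : ℂ) * Complex.I) := by
    have h : (↑(Real.log (-a)) - ↑Real.pi * Complex.I) * (1/2)
        = ↑(Real.log (-a) / 2) + ↑(-(Real.pi/2)) * Complex.I := by push_cast; ring
    rw [h, Complex.exp_add, Complex.exp_mul_I, ← Complex.ofReal_cos, ← Complex.ofReal_sin,
      Real.cos_neg, Real.sin_neg, Real.cos_pi_div_two, Real.sin_pi_div_two,
      ← Complex.ofReal_exp]
    have : Real.exp (Real.log (-a) / 2) = Real.sqrt (-a) := by
      rw [Real.sqrt_eq_rpow, Real.rpow_def_of_pos (by linarith)]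
      ring_nf
    rw [this]; push_cast; ring
  rw [hval] at hexp
  refine hexp.congr' ?_
  filter_upwards [self_mem_nhdsWithin] with ε (hε : 0 < ε)
  have hne : (a : ℂ) - ε * Complex.I ≠ 0 := by
    intro h
    have := congrArg Complex.im h
    simp at this
    exact hε.ne' this
  simp only [Function.comp]
  rw [Complex.cpow_def_of_ne_zero hne]

/-- Boundary values of powers of the inverse Joukowsky map: for `x ∈ (-1,1)`,
`lim_{ε→0⁺} i (J₊⁻¹(x+iε)^k − J₊⁻¹(x−iε)^k)/2 = U_{k−1}(x) √(1−x²)`. -/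
theorem jinv_pow_boundary_values (x : ℝ) (hx : x ∈ Set.Ioo (-1 : ℝ) 1) (k : ℕ) (hk : 1 ≤ k) :
    Tendsto
      (fun ε : ℝ =>
        Complex.I * ((Jinv ((x : ℂ) + ε * Complex.I)) ^ k -
          (Jinv ((x : ℂ) - ε * Complex.I)) ^ k) / 2)
      (nhdsWithin 0 (Set.Ioi 0))
      (nhds ((((Polynomial.Chebyshev.U ℝ ((k : ℤ) - 1)).eval x : ℝ) : ℂ) *
        (Real.sqrt (1 - x ^ 2) : ℂ))) := by
  obtain ⟨hx1, hx2⟩ := hx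
  have h1 : x - 1 < 0 := by linarith
  have h2 : 0 < x + 1 := by linarith
  set s1 : ℝ := Real.sqrt (1 - x) with hs1
  set s2 : ℝ := Real.sqrt (1 + x) with hs2
  set A : ℂ := (x : ℂ) - ((s1 : ℂ) * Complex.I) * (s2 : ℂ) with hA
  set B : ℂ := (x : ℂ) - (-((s1 : ℂ) * Complex.I)) * (s2 : ℂ) with hB
  -- limits of Jinv on each side
  have hfA : Tendsto (fun ε : ℝ => Jinv ((x : ℂ) + ε * Complex.I))
      (nhdsWithin 0 (Set.Ioi 0)) (nhds A) := by
    have hm : Tendsto (fun ε : ℝ => (((x - 1 : ℝ) : ℂ) + ε * Complex.I) ^ ((1:ℂ)/2))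
        (nhdsWithin 0 (Set.Ioi 0)) (nhds ((Real.sqrt (-(x-1)) : ℂ) * Complex.I)) :=
      sqrt_bv_neg (x - 1) h1
    have hp : Tendsto (fun ε : ℝ => (((x + 1 : ℝ) : ℂ) + ε * Complex.I) ^ ((1:ℂ)/2))
        (nhdsWithin 0 (Set.Ioi 0)) (nhds (Real.sqrt (x+1))) :=
      sqrt_bv_pos (x + 1) h2
    have hid : Tendsto (fun ε : ℝ => ((x : ℂ) + ε * Complex.I))
        (nhdsWithin 0 (Set.Ioi 0)) (nhds (x : ℂ)) := by
      have : Continuous (fun ε : ℝ => ((x : ℂ) + ε * Complex.I)) := by continuity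
      simpa using (this.tendsto 0).mono_left nhdsWithin_le_nhds
    have := hid.sub (hm.mul hp)
    have heq : ∀ ε : ℝ, ((x : ℂ) + ε * Complex.I) -
        ((((x - 1 : ℝ) : ℂ) + ε * Complex.I) ^ ((1:ℂ)/2)) *
        ((((x + 1 : ℝ) : ℂ) + ε * Complex.I) ^ ((1:ℂ)/2)) = Jinv ((x : ℂ) + ε * Complex.I) := by
      intro ε
      unfold Jinv
      congr 2 <;> push_cast <;> ring
    rw [hA]
    have hval : (x : ℂ) - ((Real.sqrt (-(x-1)) : ℂ) * Complex.I) * (Real.sqrt (x+1) : ℂ)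
        = (x : ℂ) - ((s1 : ℂ) * Complex.I) * (s2 : ℂ) := by
      have e1 : -(x-1) = 1 - x := by ring
      have e2 : x + 1 = 1 + x := by ring
      rw [hs1, hs2, e1, e2]
    rw [← hval]
    exact this.congr heq
  have hfB : Tendsto (fun ε : ℝ => Jinv ((x : ℂ) - ε * Complex.I))
      (nhdsWithin 0 (Set.Ioi 0)) (nhds B) := by
    have hm : Tendsto (fun ε : ℝ => (((x - 1 : ℝ) : ℂ) - ε * Complex.I) ^ ((1:ℂ)/2))
        (nhdsWithin 0 (Set.Ioi 0)) (nhds (-((Real.sqrt (-(x-1)) : ℂ) * Complex.I))) :=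
      sqrt_bv_neg' (x - 1) h1
    have hp : Tendsto (fun ε : ℝ => (((x + 1 : ℝ) : ℂ) - ε * Complex.I) ^ ((1:ℂ)/2))
        (nhdsWithin 0 (Set.Ioi 0)) (nhds (Real.sqrt (x+1))) :=
      sqrt_bv_pos' (x + 1) h2
    have hid : Tendsto (fun ε : ℝ => ((x : ℂ) - ε * Complex.I))
        (nhdsWithin 0 (Set.Ioi 0)) (nhds (x : ℂ)) := by
      have : Continuous (fun ε : ℝ => ((x : ℂ) - ε * Complex.I)) := by continuity
      simpa using (this.tendsto 0).mono_left nhdsWithin_le_nhds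
    have := hid.sub (hm.mul hp)
    have heq : ∀ ε : ℝ, ((x : ℂ) - ε * Complex.I) -
        ((((x - 1 : ℝ) : ℂ) - ε * Complex.I) ^ ((1:ℂ)/2)) *
        ((((x + 1 : ℝ) : ℂ) - ε * Complex.I) ^ ((1:ℂ)/2)) = Jinv ((x : ℂ) - ε * Complex.I) := by
      intro ε
      unfold Jinv
      congr 2 <;> push_cast <;> ring
    rw [hB]
    have hval : (x : ℂ) - (-((Real.sqrt (-(x-1)) : ℂ) * Complex.I)) * (Real.sqrt (x+1) : ℂ)
        = (x : ℂ) - (-((s1 : ℂ) * Complex.I)) * (s2 : ℂ) := by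
      have e1 : -(x-1) = 1 - x := by ring
      have e2 : x + 1 = 1 + x := by ring
      rw [hs1, hs2, e1, e2]
    rw [← hval]
    exact this.congr heq
  have hT : Tendsto
      (fun ε : ℝ =>
        Complex.I * ((Jinv ((x : ℂ) + ε * Complex.I)) ^ k -
          (Jinv ((x : ℂ) - ε * Complex.I)) ^ k) / 2)
      (nhdsWithin 0 (Set.Ioi 0)) (nhds (Complex.I * (A ^ k - B ^ k) / 2)) :=
    (((hfA.pow k).sub (hfB.pow k)).const_mul Complex.I).div_const 2
  -- identify the limit value
  have key : Complex.I * (A ^ k - B ^ k) / 2 =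
      (((Polynomial.Chebyshev.U ℝ ((k : ℤ) - 1)).eval x : ℝ) : ℂ) *
        (Real.sqrt (1 - x ^ 2) : ℂ) := by
    set θ : ℝ := Real.arccos x with hθ
    have hcos : Real.cos θ = x := Real.cos_arccos hx1.le hx2.le
    have hsin : Real.sin θ = Real.sqrt (1 - x ^ 2) := by
      rw [hθ, Real.sin_arccos]
    have hs : s1 * s2 = Real.sqrt (1 - x ^ 2) := by
      rw [hs1, hs2, ← Real.sqrt_mul (by linarith)]
      ring_nf
    have hAe : A = Complex.exp ((-θ : ℝ) * Complex.I) := by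
      rw [Complex.exp_mul_I, ← Complex.ofReal_cos, ← Complex.ofReal_sin,
        Real.cos_neg, Real.sin_neg, hcos, hsin, hA, ← hs]
      push_cast
      ring
    have hBe : B = Complex.exp ((θ : ℝ) * Complex.I) := by
      rw [Complex.exp_mul_I, ← Complex.ofReal_cos, ← Complex.ofReal_sin, hcos, hsin, hB, ← hs]
      push_cast
      ring
    have hsum : Complex.I * (A ^ k - B ^ k) / 2 = ((Real.sin (k * θ) : ℝ) : ℂ) := by
      rw [hAe, hBe, ← Complex.exp_nat_mul, ← Complex.exp_nat_mul, Complex.ofReal_sin,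
        Complex.sin]
      push_cast
      ring_nf
    have hU := Polynomial.Chebyshev.U_real_cos θ ((k : ℤ) - 1)
    rw [hcos] at hU
    have harg : ((((k : ℤ) - 1 : ℤ) : ℝ) + 1) = (k : ℝ) := by push_cast; ring
    rw [harg] at hU
    rw [hsum, ← hU, hsin]
    push_cast
    ring
  rw [← key]
  exact hT
end
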